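/- For every x, Y ∈ E and t ∈ ℝ, the second derivative of the time-t flow map applied to the generating vector field satisfies D²(f t)(x)[Y, F x] = DF(f t x)( D(f t)(x) Y ) − D(f t)(x)( DF(x) Y ). -/

import Mathlib

/-- For every `x Y : E` and `t ∈ ℝ`,
`D²(f t)(x)[Y, F x] = DF(f t x)(D(f t)(x) Y) − D(f t)(x)(DF(x) Y)`. -/
theorem equivariant_divergence_stmt4
    {E : Type*} [NormedAddCommGroup E] [NormedSpace ℝ E] [FiniteDimensional ℝ E]
    (F : E → E) (hF : ContDiff ℝ 2 F)
    (f : ℝ → E → E)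
    (hf0 : ∀ x : E, f 0 x = x)
    (hfadd : ∀ s t : ℝ, ∀ x : E, f (s + t) x = f s (f t x))
    (hflow : ∀ t : ℝ, ∀ x : E, HasDerivAt (fun τ : ℝ => f τ x) (F (f t x)) t)
    (hfC2 : ∀ t : ℝ, ContDiff ℝ 2 (f t))
    (x Y : E) (t : ℝ) :
    fderiv ℝ (fun y => fderiv ℝ (f t) y) x Y (F x)
      = fderiv ℝ F (f t x) (fderiv ℝ (f t) x Y)
        - fderiv ℝ (f t) x (fderiv ℝ F x Y) := by
  have hdiff : ∀ y : E, DifferentiableAt ℝ (f t) y := fun y =>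
    ((hfC2 t).differentiable (by norm_num)).differentiableAt
  -- Key equivariance: D(f t)(y) (F y) = F (f t y)
  have key : ∀ y : E, fderiv ℝ (f t) y (F y) = F (f t y) := by
    intro y
    have h1 : HasDerivAt (fun s : ℝ => f (t + s) y) (F (f t y)) 0 := by
      have hadd : HasDerivAt (fun s : ℝ => t + s) 1 0 := by
        simpa using (hasDerivAt_id (0 : ℝ)).const_add t
      have hg : HasDerivAt (fun τ : ℝ => f τ y) (F (f t y)) (t + 0) := by
        simpa using hflow t y
      simpa [Function.comp_def] using (HasDerivAt.scomp (h := fun s : ℝ => t + s) 0 hg hadd)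
    have h2 : HasDerivAt (fun s : ℝ => f t (f s y)) (fderiv ℝ (f t) y (F y)) 0 := by
      have hft : HasFDerivAt (f t) (fderiv ℝ (f t) y) y := (hdiff y).hasFDerivAt
      have hfs : HasDerivAt (fun s : ℝ => f s y) (F y) 0 := by
        have := hflow 0 y
        rwa [hf0 y] at this
      have hfs' : HasFDerivAt (f t) (fderiv ℝ (f t) y) ((fun s : ℝ => f s y) 0) := by
        simpa [hf0 y] using hft
      exact hfs'.comp_hasDerivAt 0 hfs
    have heq : (fun s : ℝ => f (t + s) y) = fun s : ℝ => f t (f s y) := by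
      funext s; rw [hfadd t s y]
    rw [heq] at h1
    exact (h2.unique h1)
  -- Differentiate the equivariance identity in the space variable.
  have hφ : ContDiff ℝ 1 (fun y => fderiv ℝ (f t) y) :=
    (hfC2 t).fderiv_right (by norm_num)
  have hφx : HasFDerivAt (fun y => fderiv ℝ (f t) y)
      (fderiv ℝ (fun y => fderiv ℝ (f t) y) x) x :=
    ((hφ.differentiable one_ne_zero).differentiableAt).hasFDerivAt
  have hFx : HasFDerivAt F (fderiv ℝ F x) x :=
    ((hF.differentiable (by norm_num)).differentiableAt).hasFDerivAt
  have hA : HasFDerivAt (fun y => fderiv ℝ (f t) y (F y))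
      ((fderiv ℝ (f t) x).comp (fderiv ℝ F x)
        + (fderiv ℝ (fun y => fderiv ℝ (f t) y) x).flip (F x)) x :=
    hφx.clm_apply hFx
  have hB : HasFDerivAt (fun y => F (f t y))
      ((fderiv ℝ F (f t x)).comp (fderiv ℝ (f t) x)) x := by
    have hFft : HasFDerivAt F (fderiv ℝ F (f t x)) (f t x) :=
      ((hF.differentiable (by norm_num)).differentiableAt).hasFDerivAt
    exact hFft.comp x (hdiff x).hasFDerivAt
  have heq2 : (fun y => fderiv ℝ (f t) y (F y)) = fun y => F (f t y) := funext key
  rw [heq2] at hA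
  have := hA.unique hB
  have happ := congrArg (fun (L : E →L[ℝ] E) => L Y) this
  simp only [ContinuousLinearMap.add_apply, ContinuousLinearMap.comp_apply,
    ContinuousLinearMap.flip_apply] at happ
  rw [eq_sub_iff_add_eq, add_comm]
  exact happ
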